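/- Let H be a complex Hilbert space and let T be a densely defined linear operator in H. Assume that T*T is densely defined and that there exists a complex number λ such that T*T − λI is boundedly invertible. Then T*T is self-adjoint, i.e., (T*T)* = T*T. -/

import Mathlib

namespace LinearPMap

section Pcomp

variable {R E F G : Type*} [CommRing R]
  [AddCommGroup E] [Module R E]
  [AddCommGroup F] [Module R F]
  [AddCommGroup G] [Module R G]

/-- Composition of partially defined linear maps (unbounded operators), with the natural
domain `D(A ∘ B) = {x ∈ D(B) : B x ∈ D(A)}`, sending `x` to `A (B x)`. -/
noncomputable def pcomp (A : F →ₗ.[R] G) (B : E →ₗ.[R] F) : E →ₗ.[R] G where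
  domain := (A.domain.comap B.toFun).map B.domain.subtype
  toFun := A.toFun.comp <|
    (LinearMap.codRestrict A.domain
        (B.toFun.comp (A.domain.comap B.toFun).subtype) fun x => x.2).comp
      (Submodule.equivMapOfInjective B.domain.subtype
        (Submodule.injective_subtype _) (A.domain.comap B.toFun)).symm.toLinearMap

theorem mem_pcomp_domain {A : F →ₗ.[R] G} {B : E →ₗ.[R] F} {x : E} :
    x ∈ (A.pcomp B).domain ↔ ∃ hx : x ∈ B.domain, B ⟨x, hx⟩ ∈ A.domain := by
  constructor
  · rintro ⟨y, hy, rfl⟩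
    exact ⟨y.2, by simpa using hy⟩
  · rintro ⟨hx, hx'⟩
    exact ⟨⟨x, hx⟩, hx', rfl⟩

theorem pcomp_apply {A : F →ₗ.[R] G} {B : E →ₗ.[R] F} (x : (A.pcomp B).domain)
    (hx : (x : E) ∈ B.domain) (hx' : B ⟨(x : E), hx⟩ ∈ A.domain) :
    (A.pcomp B) x = A ⟨B ⟨(x : E), hx⟩, hx'⟩ := by
  set e := (Submodule.equivMapOfInjective B.domain.subtype
    (Submodule.injective_subtype _) (A.domain.comap B.toFun)) with he
  have hy : (((e.symm x : _) : B.domain) : E) = (x : E) := by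
    conv_rhs => rw [← e.apply_symm_apply x]
    rfl
  have h2 : ((e.symm x : _) : B.domain) = ⟨(x : E), hx⟩ := Subtype.ext hy
  show A.toFun _ = A.toFun _
  congr 1
  exact Subtype.ext (congrArg B.toFun h2)

end Pcomp

end LinearPMap

/-- `A - λ•I` is boundedly invertible: there is a bounded everywhere-defined operator `B`
on `H` with `B ((A - λ) x) = x` for all `x ∈ D(A)`, and for all `y ∈ H`, `B y ∈ D(A)` and
`(A - λ) (B y) = y`. -/
def IsBoundedlyInvertibleShift {H : Type*} [NormedAddCommGroup H] [InnerProductSpace ℂ H]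
    (A : H →ₗ.[ℂ] H) (lam : ℂ) : Prop :=
  ∃ B : H →L[ℂ] H,
    (∀ x : A.domain, B (A x - lam • (x : H)) = (x : H)) ∧
    (∀ y : H, ∃ hy : B y ∈ A.domain, A ⟨B y, hy⟩ - lam • B y = y)

open scoped LinearPMap

section SelfAdjointAux

variable {H : Type*} [NormedAddCommGroup H] [InnerProductSpace ℂ H] [CompleteSpace H]

local notation "⟪" x ", " y "⟫" => @inner ℂ _ _ x y

lemma lower_bound_aux (S : H →ₗ.[ℂ] H)
    (hpos : ∀ x : S.domain, ∃ r : ℝ, 0 ≤ r ∧ ⟪S x, (x : H)⟫ = (r : ℂ))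
    {b : ℝ} (hb : 0 < b) {μ : ℂ} (hμ : b ≤ |μ.im| ∨ μ.re ≤ -b)
    (x : S.domain) : b * ‖(x : H)‖ ≤ ‖S x - μ • (x : H)‖ := by
  obtain ⟨r, hr0, hr⟩ := hpos x
  have him : ∀ t : ℝ, ((r : ℂ) - (starRingEnd ℂ μ) * (t : ℂ)).im = μ.im * t := by
    intro t; simp
  have hre : ∀ t : ℝ, ((r : ℂ) - (starRingEnd ℂ μ) * (t : ℂ)).re = r - μ.re * t := by
    intro t; simp
  set s := ‖(x : H)‖ with hs
  have hz : ⟪S x - μ • (x : H), (x : H)⟫ = (r : ℂ) - (starRingEnd ℂ μ) * ((s^2 : ℝ) : ℂ) := by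
    rw [inner_sub_left, inner_smul_left, hr, inner_self_eq_norm_sq_to_K]
    rw [← hs]
    norm_cast
  have hkey : b * s^2 ≤ ‖⟪S x - μ • (x : H), (x : H)⟫‖ := by
    rw [hz]
    rcases hμ with h | h
    · calc b * s^2 ≤ |μ.im| * s^2 := by nlinarith [sq_nonneg s]
        _ = |μ.im * s^2| := by rw [abs_mul, abs_of_nonneg (sq_nonneg s)]
        _ = |((r : ℂ) - (starRingEnd ℂ μ) * ((s^2 : ℝ) : ℂ)).im| := by rw [him]
        _ ≤ ‖(r : ℂ) - (starRingEnd ℂ μ) * ((s^2 : ℝ) : ℂ)‖ := by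
            exact Complex.abs_im_le_norm _
    · calc b * s^2 ≤ r - μ.re * s^2 := by nlinarith [sq_nonneg s]
        _ = ((r : ℂ) - (starRingEnd ℂ μ) * ((s^2 : ℝ) : ℂ)).re := (hre _).symm
        _ ≤ ‖(r : ℂ) - (starRingEnd ℂ μ) * ((s^2 : ℝ) : ℂ)‖ := by
            exact Complex.re_le_norm _
  have hcs : ‖⟪S x - μ • (x : H), (x : H)⟫‖ ≤ ‖S x - μ • (x : H)‖ * s :=
    norm_inner_le_norm _ _
  rcases eq_or_lt_of_le (norm_nonneg (x : H)) with h0 | h0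
  · rw [hs, ← h0, mul_zero]
    exact norm_nonneg _
  · nlinarith [hkey.trans hcs]

lemma step_aux (S : H →ₗ.[ℂ] H) {b : ℝ} {μ μ' : ℂ}
    (hlow : ∀ x : S.domain, b * ‖(x : H)‖ ≤ ‖S x - μ • (x : H)‖)
    (hb : 0 < b)
    (hP : IsBoundedlyInvertibleShift S μ) (hμ' : ‖μ' - μ‖ < b) :
    IsBoundedlyInvertibleShift S μ' := by
  obtain ⟨B, hB1, hB2⟩ := hP
  have hBnorm : ‖B‖ ≤ 1 / b := by
    apply ContinuousLinearMap.opNorm_le_bound _ (by positivity)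
    intro y
    obtain ⟨hy, hy2⟩ := hB2 y
    have h1 := hlow ⟨B y, hy⟩
    rw [hy2] at h1
    rw [div_mul_eq_mul_div, le_div_iff₀ hb, one_mul, mul_comm]
    exact h1
  set k := μ' - μ with hk
  have hkB : ‖k • B‖ < 1 := by
    rw [norm_smul]
    calc ‖k‖ * ‖B‖ ≤ ‖k‖ * (1 / b) := by
          apply mul_le_mul_of_nonneg_left hBnorm (norm_nonneg _)
      _ < b * (1 / b) := by
          apply mul_lt_mul_of_pos_right hμ' (by positivity)
      _ = 1 := by field_simp
  set u : (H →L[ℂ] H)ˣ := Units.oneSub (k • B) hkB with hu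
  have huval : (↑u : H →L[ℂ] H) = 1 - k • B := rfl
  have huinv : ∀ v : H, (↑u⁻¹ : H →L[ℂ] H) ((↑u : H →L[ℂ] H) v) = v := by
    intro v
    have := u.inv_mul
    calc (↑u⁻¹ : H →L[ℂ] H) ((↑u : H →L[ℂ] H) v)
        = ((↑u⁻¹ * ↑u : H →L[ℂ] H)) v := rfl
      _ = v := by rw [this]; rfl
  have huinv' : ∀ v : H, (↑u : H →L[ℂ] H) ((↑u⁻¹ : H →L[ℂ] H) v) = v := by
    intro v
    have := u.mul_inv
    calc (↑u : H →L[ℂ] H) ((↑u⁻¹ : H →L[ℂ] H) v)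
        = ((↑u * ↑u⁻¹ : H →L[ℂ] H)) v := rfl
      _ = v := by rw [this]; rfl
  refine ⟨B ∘L (↑u⁻¹ : H →L[ℂ] H), ?_, ?_⟩
  · intro x
    have hx := hB1 x
    have h1 : S x - μ' • (x : H) = (↑u : H →L[ℂ] H) (S x - μ • (x : H)) := by
      rw [huval]
      simp only [ContinuousLinearMap.sub_apply, ContinuousLinearMap.one_apply,
        ContinuousLinearMap.smul_apply, hx, hk]
      rw [sub_smul]
      abel
    rw [h1]
    show B ((↑u⁻¹ : H →L[ℂ] H) ((↑u : H →L[ℂ] H) (S x - μ • (x : H)))) = (x : H)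
    rw [huinv]
    exact hx
  · intro y
    obtain ⟨hv, hv2⟩ := hB2 ((↑u⁻¹ : H →L[ℂ] H) y)
    refine ⟨hv, ?_⟩
    show S ⟨B ((↑u⁻¹ : H →L[ℂ] H) y), hv⟩ - μ' • (B ((↑u⁻¹ : H →L[ℂ] H) y)) = y
    have h2 : S ⟨B ((↑u⁻¹ : H →L[ℂ] H) y), hv⟩ - μ' • (B ((↑u⁻¹ : H →L[ℂ] H) y))
        = (↑u : H →L[ℂ] H) ((↑u⁻¹ : H →L[ℂ] H) y) := by
      rw [huval]
      simp only [ContinuousLinearMap.sub_apply, ContinuousLinearMap.one_apply,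
        ContinuousLinearMap.smul_apply]
      calc S ⟨B ((↑u⁻¹ : H →L[ℂ] H) y), hv⟩ - μ' • (B ((↑u⁻¹ : H →L[ℂ] H) y))
          = (S ⟨B ((↑u⁻¹ : H →L[ℂ] H) y), hv⟩ - μ • (B ((↑u⁻¹ : H →L[ℂ] H) y)))
            - k • (B ((↑u⁻¹ : H →L[ℂ] H) y)) := by rw [hk, sub_smul]; abel
        _ = (↑u⁻¹ : H →L[ℂ] H) y - k • (B ((↑u⁻¹ : H →L[ℂ] H) y)) := by rw [hv2]
    rw [h2, huinv']

lemma conj_step_aux (S : H →ₗ.[ℂ] H)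
    (hpos : ∀ x : S.domain, ∃ r : ℝ, 0 ≤ r ∧ ⟪S x, (x : H)⟫ = (r : ℂ))
    {lam : ℂ} (h : IsBoundedlyInvertibleShift S lam) :
    IsBoundedlyInvertibleShift S (starRingEnd ℂ lam) := by
  rcases eq_or_ne lam.im 0 with him0 | him0
  · rwa [Complex.conj_eq_iff_im.mpr him0]
  set b := |lam.im| with hbdef
  have hb : 0 < b := abs_pos.mpr him0
  have hstep : ∀ μ μ' : ℂ, (b ≤ |μ.im| ∨ μ.re ≤ -b) → ‖μ' - μ‖ < b →
      IsBoundedlyInvertibleShift S μ → IsBoundedlyInvertibleShift S μ' :=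
    fun μ μ' hc hd hP =>
      step_aux S (fun x => lower_bound_aux S hpos hb hc x) hb hP hd
  have hrealnorm : ∀ c : ℝ, ‖((c : ℝ) : ℂ)‖ = |c| := fun c => by
    rw [Complex.norm_real, Real.norm_eq_abs]
  have hb2 : |b/2| < b := by rw [abs_of_pos (by positivity)]; linarith
  -- stage 1: move left along the horizontal line through lam
  have h1 : ∀ n : ℕ, IsBoundedlyInvertibleShift S (lam - ((n * (b/2) : ℝ) : ℂ)) := by
    intro n
    induction n with
    | zero => simpa using h
    | succ n ih =>
      refine hstep (lam - ((n * (b/2) : ℝ) : ℂ)) _ (Or.inl ?_) ?_ ih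
      · simp [hbdef]
      · have hd : (lam - (((n+1 : ℕ) * (b/2) : ℝ) : ℂ)) - (lam - ((n * (b/2) : ℝ) : ℂ))
            = -(((b/2 : ℝ)) : ℂ) := by push_cast; ring
        rw [hd, norm_neg, hrealnorm]
        exact hb2
  obtain ⟨n₀, hn₀⟩ := exists_nat_ge ((lam.re + b) / (b/2))
  have hre0 : lam.re - n₀ * (b/2) ≤ -b := by
    have h2 : lam.re + b ≤ n₀ * (b/2) := by
      rw [div_le_iff₀ (by positivity : (0:ℝ) < b/2)] at hn₀
      linarith
    linarith
  set σ : ℝ := b / lam.im with hσ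
  have hbb : b * b = lam.im * lam.im := by
    rw [hbdef]; exact abs_mul_abs_self _
  have hσ1 : |σ| = 1 := by
    rw [hσ, abs_div, ← hbdef, abs_of_pos hb, div_self hb.ne']
  have key4 : (4:ℝ) * (b/2) * σ = 2 * lam.im := by
    rw [hσ]
    field_simp
    nlinarith [hbb]
  have hb2σ : |b/2 * σ| < b := by
    rw [abs_mul, hσ1, mul_one]; exact hb2
  set μ₀ : ℂ := lam - ((n₀ * (b/2) : ℝ) : ℂ) with hμ₀
  have hμ₀re : μ₀.re ≤ -b := by
    rw [hμ₀]; simpa using hre0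
  -- stage 2: move down (or up) across the real axis, in the left half plane
  have h2 : ∀ m : ℕ,
      IsBoundedlyInvertibleShift S (μ₀ - ((m * (b/2) * σ : ℝ) : ℂ) * Complex.I) := by
    intro m
    induction m with
    | zero =>
      have h0 : μ₀ - (((0:ℕ) * (b/2) * σ : ℝ) : ℂ) * Complex.I = μ₀ := by
        push_cast; ring
      rw [h0, hμ₀]
      exact h1 n₀
    | succ m ih =>
      refine hstep _ _ (Or.inr ?_) ?_ ih
      · simpa using hμ₀re
      · have hd : (μ₀ - (((m+1:ℕ) * (b/2) * σ : ℝ) : ℂ) * Complex.I)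
            - (μ₀ - ((m * (b/2) * σ : ℝ) : ℂ) * Complex.I)
            = -(((b/2 * σ : ℝ)) : ℂ) * Complex.I := by push_cast; ring
        rw [hd, norm_mul, Complex.norm_I, mul_one, norm_neg, hrealnorm]
        exact hb2σ
  -- stage 3: move right along the horizontal line through conj lam
  set ν : ℂ := μ₀ - ((4 * (b/2) * σ : ℝ) : ℂ) * Complex.I with hν
  have hνim : ν.im = -lam.im := by
    rw [hν, hμ₀]
    simp [key4]
    ring
  have h3 : ∀ n : ℕ,
      IsBoundedlyInvertibleShift S (ν + ((n * (b/2) : ℝ) : ℂ)) := by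
    intro n
    induction n with
    | zero =>
      have := h2 4
      have h4 : ((4:ℕ) * (b/2) * σ : ℝ) = (4 * (b/2) * σ : ℝ) := by norm_num
      simpa [hν, h4] using this
    | succ n ih =>
      refine hstep _ _ (Or.inl ?_) ?_ ih
      · simp [hνim, hbdef]
      · have hd : (ν + (((n+1:ℕ) * (b/2) : ℝ) : ℂ)) - (ν + ((n * (b/2) : ℝ) : ℂ))
            = (((b/2 : ℝ)) : ℂ) := by push_cast; ring
        rw [hd, hrealnorm]
        exact hb2
  have hfinal := h3 n₀
  have heq : ν + ((n₀ * (b/2) : ℝ) : ℂ) = starRingEnd ℂ lam := by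
    apply Complex.ext
    · rw [hν, hμ₀]; simp
    · simp [hνim]
  rwa [heq] at hfinal

lemma main_aux (S : H →ₗ.[ℂ] H) (hdense : Dense (S.domain : Set H))
    (hsym : S.IsFormalAdjoint S)
    (hpos : ∀ x : S.domain, ∃ r : ℝ, 0 ≤ r ∧ ⟪S x, (x : H)⟫ = (r : ℂ))
    (hinv : ∃ lam : ℂ, IsBoundedlyInvertibleShift S lam) : S.adjoint = S := by
  obtain ⟨lam, hlam⟩ := hinv
  have hconj := conj_step_aux S hpos hlam
  obtain ⟨B, hB1, hB2⟩ := hlam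
  obtain ⟨B2, hB21, hB22⟩ := hconj
  have hle : S ≤ S.adjoint := hsym.le_adjoint hdense
  -- injectivity of `S.adjoint - conj lam`
  have hinj : ∀ w : S.adjoint.domain,
      S.adjoint w - (starRingEnd ℂ lam) • (w : H) = 0 → (w : H) = 0 := by
    intro w hw
    have key : ∀ v : H, ⟪v, (w : H)⟫ = 0 := by
      intro v
      obtain ⟨hv, hv2⟩ := hB2 v
      have hform := LinearPMap.adjoint_isFormalAdjoint hdense w (⟨B v, hv⟩ : S.domain)
      have e1 : ⟪(S ⟨B v, hv⟩ : H), (w : H)⟫ = ⟪(B v : H), S.adjoint w⟫ := by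
        calc ⟪(S ⟨B v, hv⟩ : H), (w : H)⟫
            = starRingEnd ℂ ⟪((w : H)), (S ⟨B v, hv⟩ : H)⟫ := (inner_conj_symm _ _).symm
          _ = starRingEnd ℂ ⟪(S.adjoint w : H), (((⟨B v, hv⟩ : S.domain)) : H)⟫ := by
              rw [hform]
          _ = ⟪(B v : H), S.adjoint w⟫ := inner_conj_symm _ _
      calc ⟪v, (w : H)⟫ = ⟪S ⟨B v, hv⟩ - lam • (B v), (w : H)⟫ := by rw [hv2]
        _ = ⟪(S ⟨B v, hv⟩ : H), (w : H)⟫ - (starRingEnd ℂ lam) * ⟪(B v : H), (w : H)⟫ := by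
            rw [inner_sub_left, inner_smul_left]
        _ = ⟪(B v : H), S.adjoint w⟫ - ⟪(B v : H), (starRingEnd ℂ lam) • (w : H)⟫ := by
            rw [e1, inner_smul_right]
        _ = ⟪(B v : H), S.adjoint w - (starRingEnd ℂ lam) • (w : H)⟫ :=
            (inner_sub_right _ _ _).symm
        _ = 0 := by rw [hw, inner_zero_right]
    have := key (w : H)
    rwa [inner_self_eq_zero] at this
  have key : ∀ y : S.adjoint.domain, (y : H) ∈ S.domain := by
    intro y
    set uu := S.adjoint y - (starRingEnd ℂ lam) • (y : H) with huu
    obtain ⟨hm, hm2⟩ := hB22 uu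
    set x := B2 uu with hx
    have hmx : x ∈ S.adjoint.domain := hle.1 hm
    have hSx : S.adjoint ⟨x, hmx⟩ = S ⟨x, hm⟩ :=
      (hle.2 (x := ⟨x, hm⟩) (y := ⟨x, hmx⟩) rfl).symm
    have hdiff : S.adjoint (⟨x, hmx⟩ - y)
        - (starRingEnd ℂ lam) • (((⟨x, hmx⟩ - y : S.adjoint.domain)) : H) = 0 := by
      have hcoe : (((⟨x, hmx⟩ - y : S.adjoint.domain)) : H) = x - (y : H) := rfl
      rw [LinearPMap.map_sub, hSx, hcoe, smul_sub]
      rw [sub_sub_sub_comm, hm2, huu]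
      abel
    have hzero := hinj _ hdiff
    have hcoe : (((⟨x, hmx⟩ - y : S.adjoint.domain)) : H) = x - (y : H) := rfl
    rw [hcoe, sub_eq_zero] at hzero
    exact hzero ▸ hm
  have hdom : S.adjoint.domain = S.domain :=
    le_antisymm (fun a ha => key ⟨a, ha⟩) hle.1
  exact (LinearPMap.eq_of_le_of_domain_eq hle hdom.symm).symm

end SelfAdjointAux



theorem stmt_4 {H : Type*} [NormedAddCommGroup H] [InnerProductSpace ℂ H] [CompleteSpace H]
    (T : H →ₗ.[ℂ] H)
    (hT : Dense (T.domain : Set H))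
    (hcl : T.IsClosable)
    (hdense : Dense (((T.adjoint.pcomp T).domain : Set H)))
    (hinv : ∃ lam : ℂ, IsBoundedlyInvertibleShift (T.adjoint.pcomp T) lam) :
    (T.adjoint.pcomp T).adjoint = T.adjoint.pcomp T := by
  have hsym : (T.adjoint.pcomp T).IsFormalAdjoint (T.adjoint.pcomp T) := by
    intro x y
    obtain ⟨hx, hx'⟩ := LinearPMap.mem_pcomp_domain.mp x.2
    obtain ⟨hy, hy'⟩ := LinearPMap.mem_pcomp_domain.mp y.2
    rw [LinearPMap.pcomp_apply x hx hx', LinearPMap.pcomp_apply y hy hy']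
    have h1 := LinearPMap.adjoint_isFormalAdjoint hT
      (⟨T ⟨(x : H), hx⟩, hx'⟩ : T.adjoint.domain) (⟨(y : H), hy⟩ : T.domain)
    have h2 := LinearPMap.adjoint_isFormalAdjoint hT
      (⟨T ⟨(y : H), hy⟩, hy'⟩ : T.adjoint.domain) (⟨(x : H), hx⟩ : T.domain)
    have e := congrArg (starRingEnd ℂ) h2
    rw [inner_conj_symm, inner_conj_symm] at e
    exact h1.trans e.symm
  have hpos : ∀ x : (T.adjoint.pcomp T).domain, ∃ r : ℝ, 0 ≤ r ∧
      (inner ℂ ((T.adjoint.pcomp T) x) ((x : H)) : ℂ) = (r : ℂ) := by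
    intro x
    obtain ⟨hx, hx'⟩ := LinearPMap.mem_pcomp_domain.mp x.2
    refine ⟨‖T ⟨(x : H), hx⟩‖ ^ 2, sq_nonneg _, ?_⟩
    rw [LinearPMap.pcomp_apply x hx hx']
    have h1 := LinearPMap.adjoint_isFormalAdjoint hT
      (⟨T ⟨(x : H), hx⟩, hx'⟩ : T.adjoint.domain) (⟨(x : H), hx⟩ : T.domain)
    refine h1.trans ?_
    rw [inner_self_eq_norm_sq_to_K]
    norm_cast
  exact main_aux _ hdense hsym hpos hinv
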